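/- Unrolled consensus-error bound: Let W ∈ ℝ^{m×m} be symmetric and doubly stochastic with η := ‖W − (1/m)𝟏𝟏ᵀ‖ (spectral norm), and let {x^k} ⊂ ℝ^{md} evolve by x^{k+1} = (W ⊗ I_d)(x^k − λ^k u^k) for sequences λ^k ≥ 0 and u^k ∈ ℝ^{md}, with averages x̄^k := (1/m)Σ_{i=1}^m x_i^k. Then for every k ≥ 0, ‖x^{k+1} − x̄^{k+1} ⊗ 𝟏‖ ≤ η^{k+1} ‖x^0 − x̄^0 ⊗ 𝟏‖ + Σ_{l=0}^{k} η^{k+1−l} λ^l ‖u^l‖. -/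

import Mathlib

open scoped Matrix

/-- The Euclidean norm of the stacked vector `(y 1, …, y m) ∈ ℝ^{md}`. -/
noncomputable def stackedNorm {m d : ℕ} (y : Fin m → EuclideanSpace ℝ (Fin d)) : ℝ :=
  Real.sqrt (∑ i, ‖y i‖ ^ 2)

lemma stackedNorm_eq {m d : ℕ} (y : Fin m → EuclideanSpace ℝ (Fin d)) :
    stackedNorm y
      = ‖(WithLp.equiv 2 (∀ _ : Fin m, EuclideanSpace ℝ (Fin d))).symm y‖ := by
  rw [PiLp.norm_eq_of_L2]; rfl

lemma stackedNorm_sub_le {m d : ℕ} (a b : Fin m → EuclideanSpace ℝ (Fin d)) :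
    stackedNorm (fun i => a i - b i) ≤ stackedNorm a + stackedNorm b := by
  simp only [stackedNorm_eq]
  exact norm_sub_le _ _

lemma stackedNorm_smul {m d : ℕ} (c : ℝ) (a : Fin m → EuclideanSpace ℝ (Fin d)) :
    stackedNorm (fun i => c • a i) = |c| * stackedNorm a := by
  simp only [stackedNorm_eq]
  have : (WithLp.equiv 2 (∀ _ : Fin m, EuclideanSpace ℝ (Fin d))).symm (fun i => c • a i)
      = c • (WithLp.equiv 2 (∀ _ : Fin m, EuclideanSpace ℝ (Fin d))).symm a := rfl
  rw [this, norm_smul, Real.norm_eq_abs]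

lemma stackedNorm_op_le {m d : ℕ} (M : Matrix (Fin m) (Fin m) ℝ)
    (y : Fin m → EuclideanSpace ℝ (Fin d)) :
    stackedNorm (fun i => ∑ j, M i j • y j)
      ≤ ‖Matrix.toEuclideanCLM (𝕜 := ℝ) (n := Fin m) M‖ * stackedNorm y := by
  set C := ‖Matrix.toEuclideanCLM (𝕜 := ℝ) (n := Fin m) M‖ with hC
  have hC0 : 0 ≤ C := norm_nonneg _
  unfold stackedNorm
  have key : ∑ i, ‖∑ j, M i j • y j‖ ^ 2 ≤ C ^ 2 * ∑ i, ‖y i‖ ^ 2 := by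
    have h1 : ∀ i : Fin m, ‖∑ j, M i j • y j‖ ^ 2 = ∑ t : Fin d, (∑ j, M i j * y j t) ^ 2 := by
      intro i
      rw [EuclideanSpace.norm_eq, Real.sq_sqrt (by positivity)]
      congr 1; ext t
      have : (∑ j, M i j • y j) t = ∑ j, M i j * y j t :=
        by rw [WithLp.ofLp_sum, Finset.sum_apply]; rfl
      rw [this, Real.norm_eq_abs, sq_abs]
    have h2 : ∀ j : Fin m, ‖y j‖ ^ 2 = ∑ t : Fin d, (y j t) ^ 2 := by
      intro j
      rw [EuclideanSpace.norm_eq, Real.sq_sqrt (by positivity)]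
      congr 1; ext t; rw [Real.norm_eq_abs, sq_abs]
    simp_rw [h1, h2]
    rw [Finset.sum_comm]
    have hr : (C ^ 2 * ∑ j, ∑ t : Fin d, (y j t) ^ 2)
        = ∑ t : Fin d, C ^ 2 * ∑ j, (y j t) ^ 2 := by
      rw [Finset.sum_comm, Finset.mul_sum]
    rw [hr]
    refine Finset.sum_le_sum fun t _ => ?_
    set v : EuclideanSpace ℝ (Fin m) := (WithLp.equiv 2 (∀ _ : Fin m, ℝ)).symm (fun j => y j t)
      with hv
    have hMv : ∀ i, (Matrix.toEuclideanCLM (𝕜 := ℝ) (n := Fin m) M v) i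
        = ∑ j, M i j * y j t := by
      intro i
      rw [hv, WithLp.equiv_symm_apply, Matrix.toEuclideanCLM_toLp]
      rfl
    have hnorm : ∑ i, (∑ j, M i j * y j t) ^ 2
        = ‖Matrix.toEuclideanCLM (𝕜 := ℝ) (n := Fin m) M v‖ ^ 2 := by
      rw [EuclideanSpace.norm_eq, Real.sq_sqrt (by positivity)]
      refine Finset.sum_congr rfl fun i _ => ?_
      rw [hMv, Real.norm_eq_abs, sq_abs]
    have hvnorm : ‖v‖ ^ 2 = ∑ j, (y j t) ^ 2 := by
      rw [EuclideanSpace.norm_eq, Real.sq_sqrt (by positivity)]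
      refine Finset.sum_congr rfl fun j _ => ?_
      rw [Real.norm_eq_abs, sq_abs]; rfl
    rw [hnorm, ← hvnorm]
    calc ‖Matrix.toEuclideanCLM (𝕜 := ℝ) (n := Fin m) M v‖ ^ 2
        ≤ (C * ‖v‖) ^ 2 := by
          apply pow_le_pow_left₀ (norm_nonneg _)
          exact (Matrix.toEuclideanCLM (𝕜 := ℝ) (n := Fin m) M).le_opNorm v
      _ = C ^ 2 * ‖v‖ ^ 2 := by ring
  calc Real.sqrt (∑ i, ‖∑ j, M i j • y j‖ ^ 2)
      ≤ Real.sqrt (C ^ 2 * ∑ i, ‖y i‖ ^ 2) := Real.sqrt_le_sqrt key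
    _ = C * Real.sqrt (∑ i, ‖y i‖ ^ 2) := by
        rw [Real.sqrt_mul (sq_nonneg _), Real.sqrt_sq hC0]

/-- **Unrolled consensus-error bound**: for the dynamics
`x^{k+1} = (W ⊗ I_d)(x^k - λ^k u^k)` with `W` symmetric doubly stochastic and
`η = ‖W - (1/m)𝟙𝟙ᵀ‖`, one has for every `k`
`‖x^{k+1} - x̄^{k+1} ⊗ 𝟙‖ ≤ η^{k+1}‖x^0 - x̄^0 ⊗ 𝟙‖ + ∑_{l=0}^{k} η^{k+1-l} λ^l ‖u^l‖`. -/
theorem unrolled_consensus_error_bound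
    {m d : ℕ} (hm : 0 < m)
    (W : Matrix (Fin m) (Fin m) ℝ)
    (hWsymm : W.IsSymm)
    (hWnonneg : ∀ i j, 0 ≤ W i j)
    (hWrow : W *ᵥ (fun _ => (1 : ℝ)) = fun _ => 1)
    (hWcol : (fun _ => (1 : ℝ)) ᵥ* W = fun _ => 1)
    (η : ℝ)
    (hη : η = ‖Matrix.toEuclideanCLM (𝕜 := ℝ) (n := Fin m)
        (W - (m : ℝ)⁻¹ • Matrix.of (fun _ _ => (1 : ℝ)))‖)
    (lam : ℕ → ℝ) (hlam : ∀ k, 0 ≤ lam k)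
    (u : ℕ → Fin m → EuclideanSpace ℝ (Fin d))
    (x : ℕ → Fin m → EuclideanSpace ℝ (Fin d))
    (hx : ∀ k i, x (k + 1) i = ∑ j, W i j • (x k j - lam k • u k j)) :
    ∀ k, stackedNorm (fun i => x (k + 1) i - (m : ℝ)⁻¹ • ∑ i', x (k + 1) i')
      ≤ η ^ (k + 1) * stackedNorm (fun i => x 0 i - (m : ℝ)⁻¹ • ∑ i', x 0 i')
        + ∑ l ∈ Finset.range (k + 1), η ^ (k + 1 - l) * lam l * stackedNorm (u l) := by
  have hm' : (m : ℝ) ≠ 0 := Nat.cast_ne_zero.mpr hm.ne'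
  set M : Matrix (Fin m) (Fin m) ℝ :=
    W - (m : ℝ)⁻¹ • Matrix.of (fun _ _ => (1 : ℝ)) with hM
  have hη0 : 0 ≤ η := hη ▸ norm_nonneg _
  have hMapp : ∀ i j, M i j = W i j - (m : ℝ)⁻¹ := by
    intro i j
    simp [hM, Matrix.sub_apply, Matrix.smul_apply, Matrix.of_apply, smul_eq_mul]
  have hrow : ∀ i, ∑ j, W i j = 1 := by
    intro i
    have := congrFun hWrow i
    simpa [Matrix.mulVec, dotProduct] using this
  have hcol : ∀ j, ∑ i, W i j = 1 := by
    intro j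
    have := congrFun hWcol j
    simpa [Matrix.vecMul, dotProduct] using this
  have hMrow : ∀ i, ∑ j, M i j = 0 := by
    intro i
    simp only [hMapp]
    rw [Finset.sum_sub_distrib, hrow, Finset.sum_const, Finset.card_univ, Fintype.card_fin,
      nsmul_eq_mul, mul_inv_cancel₀ hm', sub_self]
  -- consensus error
  set y : ℕ → Fin m → EuclideanSpace ℝ (Fin d) :=
    fun k i => x k i - (m : ℝ)⁻¹ • ∑ i', x k i' with hy
  -- the key algebraic identity
  have hident : ∀ k i, y (k + 1) i
      = (∑ j, M i j • y k j) - lam k • ∑ j, M i j • u k j := by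
    intro k i
    have hMsum : ∀ z : EuclideanSpace ℝ (Fin d), ∑ j, M i j • z = 0 := by
      intro z
      rw [← Finset.sum_smul, hMrow, zero_smul]
    set A := ∑ j, W i j • x k j with hA
    set B := ∑ j, W i j • u k j with hB
    set Sx := ∑ j, x k j with hSx
    set Su := ∑ j, u k j with hSu
    have hMx : ∀ (z : Fin m → EuclideanSpace ℝ (Fin d)),
        ∑ j, M i j • z j = (∑ j, W i j • z j) - (m : ℝ)⁻¹ • ∑ j, z j := by
      intro z
      simp only [hMapp, sub_smul]
      rw [Finset.sum_sub_distrib, ← Finset.smul_sum]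
    have hx1 : x (k + 1) i = A - lam k • B := by
      rw [hx]
      simp only [smul_sub, smul_comm (W i _) (lam k)]
      rw [Finset.sum_sub_distrib, ← Finset.smul_sum]
    have hsum1 : ∑ i', x (k + 1) i' = Sx - lam k • Su := by
      simp only [hx]
      rw [Finset.sum_comm]
      have : ∀ j, ∑ i', W i' j • (x k j - lam k • u k j) = x k j - lam k • u k j := by
        intro j
        rw [← Finset.sum_smul, hcol, one_smul]
      simp only [this]
      rw [Finset.sum_sub_distrib, ← Finset.smul_sum]
    have hyk : ∑ j, M i j • y k j = (A - (m : ℝ)⁻¹ • Sx) := by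
      simp only [hy, smul_sub]
      rw [Finset.sum_sub_distrib, hMsum, sub_zero, hMx]
    have huk : ∑ j, M i j • u k j = B - (m : ℝ)⁻¹ • Su := hMx _
    have lhs : y (k + 1) i = (A - lam k • B) - (m : ℝ)⁻¹ • (Sx - lam k • Su) := by
      simp only [hy]; rw [hx1, hsum1]
    rw [lhs, hyk, huk]
    simp only [smul_sub]
    rw [smul_comm ((m : ℝ)⁻¹) (lam k)]
    abel
  -- the one-step contraction
  have hstep : ∀ k, stackedNorm (y (k + 1))
      ≤ η * stackedNorm (y k) + η * (lam k * stackedNorm (u k)) := by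
    intro k
    have h1 : stackedNorm (y (k + 1))
        = stackedNorm (fun i => (∑ j, M i j • y k j) - lam k • ∑ j, M i j • u k j) := by
      congr 1; ext i t; rw [hident]
    rw [h1]
    have h2 := stackedNorm_sub_le (fun i => ∑ j, M i j • y k j)
      (fun i => lam k • ∑ j, M i j • u k j)
    have h3 := stackedNorm_op_le M (y k)
    have h4 : stackedNorm (fun i => lam k • ∑ j, M i j • u k j)
        = lam k * stackedNorm (fun i => ∑ j, M i j • u k j) := by
      rw [stackedNorm_smul, abs_of_nonneg (hlam k)]
    have h5 := stackedNorm_op_le M (u k)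
    rw [← hη] at h3 h5
    have h6 : lam k * stackedNorm (fun i => ∑ j, M i j • u k j)
        ≤ lam k * (η * stackedNorm (u k)) :=
      mul_le_mul_of_nonneg_left h5 (hlam k)
    nlinarith [h2, h3, h4, h6]
  -- main induction
  have main : ∀ k, stackedNorm (y (k + 1))
      ≤ η ^ (k + 1) * stackedNorm (y 0)
        + ∑ l ∈ Finset.range (k + 1), η ^ (k + 1 - l) * lam l * stackedNorm (u l) := by
    intro k
    induction k with
    | zero =>
      have := hstep 0
      simpa [Finset.sum_range_one, mul_assoc] using this
    | succ k ih =>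
      have h1 := hstep (k + 1)
      have h2 : η * stackedNorm (y (k + 1))
          ≤ η * (η ^ (k + 1) * stackedNorm (y 0)
            + ∑ l ∈ Finset.range (k + 1), η ^ (k + 1 - l) * lam l * stackedNorm (u l)) :=
        mul_le_mul_of_nonneg_left ih hη0
      have h3 : ∑ l ∈ Finset.range (k + 2), η ^ (k + 2 - l) * lam l * stackedNorm (u l)
          = η * (∑ l ∈ Finset.range (k + 1), η ^ (k + 1 - l) * lam l * stackedNorm (u l))
            + η * (lam (k + 1) * stackedNorm (u (k + 1))) := by
        rw [Finset.sum_range_succ, Finset.mul_sum]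
        have hlast : k + 2 - (k + 1) = 1 := by omega
        rw [hlast, pow_one]
        congr 1
        · refine Finset.sum_congr rfl fun l hl => ?_
          have hl' : l < k + 1 := Finset.mem_range.mp hl
          have : k + 2 - l = (k + 1 - l) + 1 := by omega
          rw [this, pow_succ]
          ring
        · ring
      rw [h3]
      have h4 : η * (η ^ (k + 1) * stackedNorm (y 0)) = η ^ (k + 2) * stackedNorm (y 0) := by
        rw [pow_succ]; ring
      nlinarith [h1, h2]
  intro k
  exact main k
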